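/- For every positive integer n, the number of divisors of n satisfies τ(n) ≤ √3 · n^{1/2}. -/

import Mathlib

private lemma tau_pp (p k : ℕ) (pp : p.Prime) : (p ^ k).divisors.card = k + 1 := by
  simp [Nat.divisors_prime_pow pp]

private lemma lemA (a : ℕ) : 4 * (a + 1) ^ 2 ≤ 9 * 2 ^ a := by
  match a with
  | 0 => norm_num
  | 1 => norm_num
  | (a + 2) =>
    induction a with
    | zero => norm_num
    | succ a ih =>
      calc 4 * (a + 2 + 1 + 1) ^ 2 ≤ 2 * (4 * (a + 2 + 1) ^ 2) := by
            nlinarith [sq_nonneg a, a.zero_le]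
      _ ≤ 2 * (9 * 2 ^ (a + 2)) := by omega
      _ = 9 * 2 ^ (a + 1 + 2) := by ring

private lemma lemB (b : ℕ) : 3 * (b + 1) ^ 2 ≤ 4 * 3 ^ b := by
  match b with
  | 0 => norm_num
  | (b + 1) =>
    induction b with
    | zero => norm_num
    | succ b ih =>
      calc 3 * (b + 1 + 1 + 1) ^ 2 ≤ 3 * (3 * (b + 1 + 1) ^ 2) := by
            nlinarith [sq_nonneg b, b.zero_le]
      _ ≤ 3 * (4 * 3 ^ (b + 1)) := by omega
      _ = 4 * 3 ^ (b + 1 + 1) := by ring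

private lemma lemC (p a : ℕ) (h5 : 5 ≤ p) : (a + 1) ^ 2 ≤ p ^ a := by
  have h : (a + 1) ^ 2 ≤ 5 ^ a := by
    induction a with
    | zero => norm_num
    | succ a ih =>
      calc (a + 1 + 1) ^ 2 ≤ 5 * (a + 1) ^ 2 := by nlinarith [sq_nonneg a, a.zero_le]
      _ ≤ 5 * 5 ^ a := by omega
      _ = 5 ^ (a + 1) := by ring
  exact h.trans (Nat.pow_le_pow_left h5 a)

private lemma lemD : ∀ n : ℕ, 0 < n → Nat.Coprime n 6 → n.divisors.card ^ 2 ≤ n := by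
  intro n
  induction n using Nat.recOnPosPrimePosCoprime with
  | prime_pow p k pp hk =>
    intro _ hcop
    have pp' : p.Prime := pp
    have h5 : 5 ≤ p := by
      have h2 : p ≠ 2 := by
        rintro rfl
        have : (2 : ℕ) ∣ (2 ^ k).gcd 6 := Nat.dvd_gcd (dvd_pow_self 2 hk.ne') (by norm_num)
        rw [hcop] at this; omega
      have h3 : p ≠ 3 := by
        rintro rfl
        have : (3 : ℕ) ∣ (3 ^ k).gcd 6 := Nat.dvd_gcd (dvd_pow_self 3 hk.ne') (by norm_num)
        rw [hcop] at this; omega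
      have h4 : p ≠ 4 := by
        rintro rfl
        norm_num at pp'
      have := pp'.two_le
      omega
    rw [tau_pp p k pp']
    exact lemC p k h5
  | zero => intro h; omega
  | one => intro _ _; simp
  | coprime a b ha hb hab iha ihb =>
    intro _ hcop
    have hcopa : Nat.Coprime a 6 := Nat.Coprime.coprime_dvd_left ⟨b, rfl⟩ hcop
    have hcopb : Nat.Coprime b 6 := Nat.Coprime.coprime_dvd_left ⟨a, mul_comm a b⟩ hcop
    rw [Nat.Coprime.card_divisors_mul hab, mul_pow]
    exact Nat.mul_le_mul (iha (by omega) hcopa) (ihb (by omega) hcopb)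

private lemma tau_sq_le (n : ℕ) (hn : 0 < n) : 12 * n.divisors.card ^ 2 ≤ 36 * n := by
  set a := n.factorization 2 with ha
  set b := n.factorization 3 with hb
  set m := (n / 2 ^ a) / 3 ^ b with hm
  have h2 : (2 : ℕ).Prime := Nat.prime_two
  have h3 : (3 : ℕ).Prime := Nat.prime_three
  have hn2 : 2 ^ a * (n / 2 ^ a) = n := Nat.ordProj_mul_ordCompl_eq_self n 2
  have hcop2 : Nat.Coprime 2 (n / 2 ^ a) := Nat.coprime_ordCompl h2 hn.ne'
  have hq : 0 < n / 2 ^ a := Nat.ordCompl_pos 2 hn.ne'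
  have hbq : (n / 2 ^ a).factorization 3 = b := by
    rw [hb, ha, Nat.factorization_ordCompl n 2]
    simp
  have hn3 : 3 ^ b * m = n / 2 ^ a := by
    rw [hm, ← hbq]; exact Nat.ordProj_mul_ordCompl_eq_self (n / 2 ^ a) 3
  have hcop3 : Nat.Coprime 3 m := by
    rw [hm, ← hbq]; exact Nat.coprime_ordCompl h3 hq.ne'
  have hmdvd : m ∣ n / 2 ^ a := hn3 ▸ Dvd.intro_left _ rfl
  have hm2 : Nat.Coprime 2 m := Nat.Coprime.coprime_dvd_right hmdvd hcop2
  have hmpos : 0 < m := by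
    rcases Nat.eq_zero_or_pos m with h | h
    · rw [h, mul_zero] at hn3; omega
    · exact h
  have hcopm6 : Nat.Coprime m 6 := by
    have h6 : (6 : ℕ) = 2 * 3 := by norm_num
    rw [h6]
    exact Nat.Coprime.mul_right hm2.symm hcop3.symm
  have hcab : Nat.Coprime (2 ^ a) (3 ^ b * m) := by
    rw [hn3]; exact Nat.Coprime.pow_left a hcop2
  have hcbm : Nat.Coprime (3 ^ b) m := Nat.Coprime.pow_left b hcop3
  have hfact : n = 2 ^ a * (3 ^ b * m) := by rw [hn3, hn2]
  have htau : n.divisors.card = (a + 1) * ((b + 1) * m.divisors.card) := by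
    rw [hfact, Nat.Coprime.card_divisors_mul hcab, Nat.Coprime.card_divisors_mul hcbm,
      tau_pp 2 a h2, tau_pp 3 b h3]
  have hD : m.divisors.card ^ 2 ≤ m := lemD m hmpos hcopm6
  have hA := lemA a
  have hB := lemB b
  calc 12 * n.divisors.card ^ 2
      = (4 * (a + 1) ^ 2) * ((3 * (b + 1) ^ 2) * m.divisors.card ^ 2) := by
        rw [htau]; ring
    _ ≤ (9 * 2 ^ a) * ((4 * 3 ^ b) * m) :=
        Nat.mul_le_mul hA (Nat.mul_le_mul hB hD)
    _ = 36 * n := by rw [hfact]; ring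

theorem tau_le_sqrt_three_mul_sqrt (n : ℕ) (hn : 0 < n) :
    (n.divisors.card : ℝ) ≤ Real.sqrt 3 * Real.sqrt n := by
  have h := tau_sq_le n hn
  have hsq : (n.divisors.card : ℝ) ^ 2 ≤ 3 * n := by
    have : (12 : ℝ) * (n.divisors.card : ℝ) ^ 2 ≤ 36 * n := by exact_mod_cast h
    linarith
  have h1 : (n.divisors.card : ℝ) = Real.sqrt ((n.divisors.card : ℝ) ^ 2) := by
    rw [Real.sqrt_sq (by positivity)]
  rw [h1, ← Real.sqrt_mul (by norm_num) (n : ℝ)]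
  exact Real.sqrt_le_sqrt hsq
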